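/- arXiv:1508.07539 — 8 statements merged into one kernel-verified Lean document; each statement's English description precedes it below -/
import Mathlib

section
/- Let Ω ⊆ ℝ^d be a compact set, let x_1,…,x_N ∈ Ω, and suppose the functions φ_1,…,φ_N : Ω → ℝ provide a stable local polynomial reproduction of degree m ∈ ℕ with constants C1, C2 and fill distance h, with δ := 2 C2 h. Then for every continuous function u : Ω → ℝ and every x ∈ Ω, |u(x) − ∑_{j=1}^N φ_j(x) u(x_j)| ≤ C1 · ω(u, δ), where ω(u, δ) := sup{ |u(y) − u(z)| : y, z ∈ Ω, ‖y − z‖₂ ≤ δ }. In particular, sup_{x∈Ω} |u(x) − ∑_{j=1}^N φ_j(x) u(x_j)| ≤ C1 ω(u, δ). -/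
open scoped BigOperators

/-- uniform bound for the MLS approximation error of a continuous function
via the modulus of continuity, given a stable local polynomial reproduction. -/
theorem stmt_0
    {d N : ℕ} (Ω : Set (EuclideanSpace ℝ (Fin d))) (hΩ : IsCompact Ω)
    (x : Fin N → EuclideanSpace ℝ (Fin d)) (hx : ∀ j, x j ∈ Ω)
    (φ : Fin N → EuclideanSpace ℝ (Fin d) → ℝ)
    (m : ℕ) (C1 C2 h δ : ℝ)
    (hC1 : 0 < C1) (hC2 : 0 < C2) (hh : 0 < h) (hδ : δ = 2 * C2 * h)
    (hrep : ∀ p : MvPolynomial (Fin d) ℝ, p.totalDegree ≤ m →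
      ∀ y ∈ Ω, ∑ j, φ j y * MvPolynomial.eval (fun i => x j i) p
        = MvPolynomial.eval (fun i => y i) p)
    (hstab : ∀ y ∈ Ω, ∑ j, |φ j y| ≤ C1)
    (hloc : ∀ j, ∀ y ∈ Ω, δ < ‖y - x j‖ → φ j y = 0)
    (u : EuclideanSpace ℝ (Fin d) → ℝ) (hu : ContinuousOn u Ω) :
    (∀ x₀ ∈ Ω, |u x₀ - ∑ j, φ j x₀ * u (x j)| ≤
      C1 * sSup {t | ∃ y ∈ Ω, ∃ z ∈ Ω, ‖y - z‖ ≤ δ ∧ t = |u y - u z|}) ∧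
    sSup ((fun x₀ => |u x₀ - ∑ j, φ j x₀ * u (x j)|) '' Ω) ≤
      C1 * sSup {t | ∃ y ∈ Ω, ∃ z ∈ Ω, ‖y - z‖ ≤ δ ∧ t = |u y - u z|} := by
  set S : Set ℝ := {t | ∃ y ∈ Ω, ∃ z ∈ Ω, ‖y - z‖ ≤ δ ∧ t = |u y - u z|} with hS
  have hδ0 : 0 ≤ δ := by nlinarith
  -- S is bounded above
  have himg : IsCompact (u '' Ω) := hΩ.image_of_continuousOn hu
  obtain ⟨M, hM⟩ := himg.isBounded.exists_norm_le
  have hbdd : BddAbove S := by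
    refine ⟨2 * M, ?_⟩
    rintro t ⟨y, hy, z, hz, -, rfl⟩
    have h1 : |u y| ≤ M := hM _ ⟨y, hy, rfl⟩
    have h2 : |u z| ≤ M := hM _ ⟨z, hz, rfl⟩
    calc |u y - u z| ≤ |u y| + |u z| := abs_sub _ _
      _ ≤ 2 * M := by linarith
  -- pointwise bound
  have main : ∀ x₀ ∈ Ω, |u x₀ - ∑ j, φ j x₀ * u (x j)| ≤ C1 * sSup S := by
    intro x₀ hx₀
    have hω0 : 0 ≤ sSup S := by
      have : (0 : ℝ) ∈ S := ⟨x₀, hx₀, x₀, hx₀, by simp [hδ0], by simp⟩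
      exact le_csSup hbdd this
    have hsum1 : ∑ j, φ j x₀ = 1 := by
      have := hrep 1 (by simp) x₀ hx₀
      simpa using this
    have key : u x₀ - ∑ j, φ j x₀ * u (x j) = ∑ j, φ j x₀ * (u x₀ - u (x j)) := by
      rw [Finset.sum_congr rfl (fun j _ => mul_sub (φ j x₀) (u x₀) (u (x j)))]
      rw [Finset.sum_sub_distrib, ← Finset.sum_mul, hsum1]
      ring
    rw [key]
    calc |∑ j, φ j x₀ * (u x₀ - u (x j))|
        ≤ ∑ j, |φ j x₀ * (u x₀ - u (x j))| := Finset.abs_sum_le_sum_abs _ _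
      _ ≤ ∑ j, |φ j x₀| * sSup S := by
          refine Finset.sum_le_sum fun j _ => ?_
          rw [abs_mul]
          by_cases hz : φ j x₀ = 0
          · simp [hz]
          · refine mul_le_mul_of_nonneg_left ?_ (abs_nonneg _)
            have hdist : ‖x₀ - x j‖ ≤ δ := by
              by_contra hc
              exact hz (hloc j x₀ hx₀ (lt_of_not_ge hc))
            exact le_csSup hbdd ⟨x₀, hx₀, x j, hx j, hdist, rfl⟩
      _ = (∑ j, |φ j x₀|) * sSup S := (Finset.sum_mul ..).symm
      _ ≤ C1 * sSup S := mul_le_mul_of_nonneg_right (hstab x₀ hx₀) hω0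
  refine ⟨main, ?_⟩
  rcases Set.eq_empty_or_nonempty Ω with hΩe | ⟨y0, hy0⟩
  · simp only [hΩe, Set.image_empty, Real.sSup_empty]
    have hSe : S = ∅ := by ext t; simp [hS, hΩe]
    rw [hSe, Real.sSup_empty, mul_zero]
  · refine Real.sSup_le ?_ ?_
    · rintro t ⟨x₀, hx₀, rfl⟩
      exact main x₀ hx₀
    · have hω0 : 0 ≤ sSup S :=
        le_csSup hbdd ⟨y0, hy0, y0, hy0, by simp [hδ0], by simp⟩
      positivity
end

section
/- Let Ω ⊆ ℝ^d be a compact convex set, let x_1,…,x_N ∈ Ω, and suppose φ_1,…,φ_N : Ω → ℝ provide a stable local polynomial reproduction of degree m ≥ 1 with constants C1, C2 and fill distance h, with δ := 2 C2 h. Then there is a constant C > 0, depending only on m, d and C1 (not on u, N, or h), such that for every function u that is (m+1)-times continuously differentiable on a neighborhood of Ω with all derivatives of order m+1 bounded on Ω, sup_{x∈Ω} |u(x) − ∑_{j=1}^N φ_j(x) u(x_j)| ≤ C δ^{m+1} · sup_{x∈Ω} ‖D^{m+1}u(x)‖, where ‖D^{m+1}u(x)‖ denotes the norm of the (m+1)-st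 (iterated) derivative of u at x. -/
open scoped BigOperators

open Set Function

/-- Composition of a Taylor series with an affine map `t ↦ c + g t`. -/
theorem hasFTaylorSeriesUpToOn_comp_affine
    {E F G : Type*} [NormedAddCommGroup E] [NormedSpace ℝ E]
    [NormedAddCommGroup F] [NormedSpace ℝ F]
    [NormedAddCommGroup G] [NormedSpace ℝ G]
    {n : WithTop ℕ∞} {f : E → F} {p : E → FormalMultilinearSeries ℝ E F} {s : Set E}
    (hf : HasFTaylorSeriesUpToOn n f p s) (c : E) (g : G →L[ℝ] E) :
    HasFTaylorSeriesUpToOn n (fun t => f (c + g t))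
      (fun t k => (p (c + g t) k).compContinuousLinearMap fun _ => g)
      ((fun t => c + g t) ⁻¹' s) := by
  let A : G → E := fun t => c + g t
  have hA : ∀ t : G, HasFDerivAt A (g : G →L[ℝ] E) t := fun t =>
    (g.hasFDerivAt.const_add c)
  let B : ∀ m : ℕ, (E[×m]→L[ℝ] F) → G[×m]→L[ℝ] F := fun m h =>
    h.compContinuousLinearMap fun _ => g
  have hB : ∀ m, IsBoundedLinearMap ℝ (B m) := fun m =>
    isBoundedLinearMap_continuousMultilinearMap_comp_linear g
  constructor
  · intro x hx
    show _ = f (A x)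
    rw [← hf.zero_eq (A x) hx]
    change (p (A x) 0 fun _ : Fin 0 => g 0) = p (A x) 0 0
    rw [ContinuousLinearMap.map_zero]
    rfl
  · intro m hm x hx
    refine HasFDerivWithinAt.congr_fderiv ((hB m).hasFDerivAt.comp_hasFDerivWithinAt x
        ((hf.fderivWithin m hm (A x) hx).comp x ((hA x).hasFDerivWithinAt) (Subset.refl _))) ?_
    ext y v
    change p (A x) m.succ (Fin.cons (g y) (g ∘ v)) = p (A x) (Nat.succ m) (g ∘ Fin.cons y v)
    rw [Fin.comp_cons]
  · intro m hm
    exact (hB m).continuous.comp_continuousOn <| (hf.cont m hm).comp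
      ((continuous_const.add g.continuous).continuousOn) (Subset.refl _)

/-- Taylor approximation of a `C^{n+1}` function along a segment. -/
theorem taylor_segment {E : Type*} [NormedAddCommGroup E] [NormedSpace ℝ E]
    {n : ℕ} {u : E → ℝ} {U : Set E} (hU : IsOpen U)
    (hu : ContDiffOn ℝ (n + 1 : ℕ) u U) (x₀ v : E)
    (hseg : ∀ t ∈ Icc (0:ℝ) 1, x₀ + t • v ∈ U)
    {C : ℝ} (hC : ∀ t ∈ Icc (0:ℝ) 1, ‖iteratedFDeriv ℝ (n+1) u (x₀ + t • v)‖ ≤ C) :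
    |u (x₀ + v) - ∑ k ∈ Finset.range (n+1),
        ((k.factorial : ℝ))⁻¹ • (iteratedFDeriv ℝ k u x₀ fun _ => v)| ≤
      C * ‖v‖ ^ (n+1) / n.factorial := by
  set L : ℝ →L[ℝ] E := ContinuousLinearMap.toSpanSingleton ℝ v with hL
  set g : ℝ → ℝ := fun t => u (x₀ + L t) with hg
  have hIccsub : Icc (0:ℝ) 1 ⊆ (fun t => x₀ + L t) ⁻¹' U := fun t ht => hseg t ht
  have hp : HasFTaylorSeriesUpToOn (n + 1 : ℕ) u (ftaylorSeriesWithin ℝ u U) U :=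
    hu.ftaylorSeriesWithin hU.uniqueDiffOn
  have hq : HasFTaylorSeriesUpToOn (n + 1 : ℕ) g
      (fun t k => ((ftaylorSeriesWithin ℝ u U (x₀ + L t) k).compContinuousLinearMap
        fun _ => L)) (Icc (0:ℝ) 1) :=
    (hasFTaylorSeriesUpToOn_comp_affine hp x₀ L).mono hIccsub
  have key : ∀ k : ℕ, k ≤ n + 1 → ∀ t ∈ Icc (0:ℝ) 1,
      iteratedDerivWithin k g (Icc 0 1) t
        = iteratedFDeriv ℝ k u (x₀ + t • v) (fun _ => v) := by
    intro k hk t ht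
    rw [iteratedDerivWithin_eq_iteratedFDerivWithin,
      ← hq.eq_iteratedFDerivWithin_of_uniqueDiffOn (by exact_mod_cast hk)
        (uniqueDiffOn_Icc zero_lt_one) ht]
    have : ftaylorSeriesWithin ℝ u U (x₀ + L t) k = iteratedFDeriv ℝ k u (x₀ + L t) :=
      iteratedFDerivWithin_of_isOpen k hU (hseg t ht)
    rw [ContinuousMultilinearMap.compContinuousLinearMap_apply, this]
    simp [hL, ContinuousLinearMap.toSpanSingleton_apply]
  have hnorm : ∀ t ∈ Icc (0:ℝ) 1,
      ‖iteratedDerivWithin (n+1) g (Icc 0 1) t‖ ≤ C * ‖v‖ ^ (n+1) := by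
    intro t ht
    rw [key (n+1) le_rfl t ht]
    calc ‖iteratedFDeriv ℝ (n+1) u (x₀ + t • v) (fun _ => v)‖
        ≤ ‖iteratedFDeriv ℝ (n+1) u (x₀ + t • v)‖ * ∏ _i : Fin (n+1), ‖v‖ :=
          ContinuousMultilinearMap.le_opNorm _ _
      _ ≤ C * ‖v‖ ^ (n+1) := by
          rw [Finset.prod_const, Finset.card_univ, Fintype.card_fin]
          have h0 : (0:ℝ) ≤ ‖v‖ ^ (n+1) := by positivity
          exact mul_le_mul_of_nonneg_right (hC t ht) h0
  have hgC : ContDiffOn ℝ (n + 1 : ℕ) g (Icc (0:ℝ) 1) := by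
    have hA : ContDiffOn ℝ (n + 1 : ℕ) (fun t : ℝ => x₀ + L t) (Icc (0:ℝ) 1) :=
      (contDiff_const.add L.contDiff).contDiffOn
    exact hu.comp hA hIccsub
  have := taylor_mean_remainder_bound (f := g) (a := 0) (b := 1) (x := 1)
    (C := C * ‖v‖ ^ (n+1)) (n := n) zero_le_one (by exact_mod_cast hgC)
    (right_mem_Icc.mpr zero_le_one) hnorm
  rw [taylor_within_apply] at this
  have h1 : g 1 = u (x₀ + v) := by simp [hg, hL, ContinuousLinearMap.toSpanSingleton_apply]
  simp only [sub_zero, one_pow, mul_one, smul_eq_mul] at this ⊢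
  calc |u (x₀ + v) - ∑ k ∈ Finset.range (n+1),
        ((k.factorial : ℝ))⁻¹ * (iteratedFDeriv ℝ k u x₀ fun _ => v)|
      = ‖g 1 - ∑ k ∈ Finset.range (n + 1),
          ((k.factorial : ℝ))⁻¹ * iteratedDerivWithin k g (Icc 0 1) 0‖ := by
        rw [h1]
        congr 2
        refine Finset.sum_congr rfl fun k hk => ?_
        rw [key k ((Nat.lt_succ_iff.mp (Finset.mem_range.mp hk)).trans (Nat.le_succ n)) 0
          (left_mem_Icc.mpr zero_le_one)]
        simp
    _ ≤ C * ‖v‖ ^ (n+1) / n.factorial := this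

theorem exists_taylor_poly (d m : ℕ) (u : EuclideanSpace ℝ (Fin d) → ℝ)
    (x₀ : EuclideanSpace ℝ (Fin d)) :
    ∃ P : MvPolynomial (Fin d) ℝ, P.totalDegree ≤ m ∧ ∀ y : EuclideanSpace ℝ (Fin d),
      MvPolynomial.eval (fun i => y i) P
        = ∑ k ∈ Finset.range (m+1),
            ((k.factorial : ℝ))⁻¹ • (iteratedFDeriv ℝ k u x₀ fun _ => y - x₀) := by
  classical
  refine ⟨∑ k ∈ Finset.range (m+1), ∑ r : Fin k → Fin d,
      MvPolynomial.C ((k.factorial : ℝ)⁻¹ *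
        iteratedFDeriv ℝ k u x₀ (fun t => EuclideanSpace.single (r t) 1)) *
      ∏ t : Fin k, (MvPolynomial.X (r t) - MvPolynomial.C (x₀ (r t))), ?_, ?_⟩
  · refine (MvPolynomial.totalDegree_finset_sum _ _).trans (Finset.sup_le fun k hk => ?_)
    refine (MvPolynomial.totalDegree_finset_sum _ _).trans (Finset.sup_le fun r _ => ?_)
    refine (MvPolynomial.totalDegree_mul _ _).trans ?_
    rw [MvPolynomial.totalDegree_C, zero_add]
    refine (MvPolynomial.totalDegree_finset_prod _ _).trans ?_
    have : ∀ t : Fin k,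
        (MvPolynomial.X (r t) - MvPolynomial.C (x₀ (r t)) : MvPolynomial (Fin d) ℝ).totalDegree
          ≤ 1 := by
      intro t
      rw [sub_eq_add_neg, ← MvPolynomial.C_neg]
      refine (MvPolynomial.totalDegree_add _ _).trans ?_
      simp [MvPolynomial.totalDegree_X, MvPolynomial.totalDegree_C]
    calc ∑ t : Fin k, (MvPolynomial.X (r t)
          - MvPolynomial.C (x₀ (r t)) : MvPolynomial (Fin d) ℝ).totalDegree
        ≤ ∑ _t : Fin k, 1 := Finset.sum_le_sum fun t _ => this t
      _ = k := by simp
      _ ≤ m := Nat.lt_succ_iff.mp (Finset.mem_range.mp hk)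
  · intro y
    have hy : (y - x₀ : EuclideanSpace ℝ (Fin d))
        = ∑ i : Fin d, (y i - x₀ i) • EuclideanSpace.single i (1:ℝ) := by
      ext j
      simp only [PiLp.sub_apply]
      rw [WithLp.ofLp_sum, Finset.sum_apply]
      simp [EuclideanSpace.single_apply, Finset.sum_ite_eq']
    simp only [map_sum, map_mul, MvPolynomial.eval_C, map_prod, map_sub,
      MvPolynomial.eval_X]
    refine Finset.sum_congr rfl fun k hk => ?_
    have expand : (iteratedFDeriv ℝ k u x₀ fun _ => y - x₀)
        = ∑ r : Fin k → Fin d, (∏ t : Fin k, (y (r t) - x₀ (r t))) •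
            iteratedFDeriv ℝ k u x₀ (fun t => EuclideanSpace.single (r t) 1) := by
      conv_lhs => rw [hy]
      rw [ContinuousMultilinearMap.map_sum (iteratedFDeriv ℝ k u x₀)
        (fun _ j => (y j - x₀ j) • EuclideanSpace.single j (1:ℝ))]
      refine Finset.sum_congr rfl fun r _ => ?_
      exact (iteratedFDeriv ℝ k u x₀).map_smul_univ
        (fun t => y (r t) - x₀ (r t)) (fun t => EuclideanSpace.single (r t) 1)
    rw [expand, Finset.smul_sum]
    refine Finset.sum_congr rfl fun r _ => ?_
    simp only [smul_eq_mul]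
    ring

/-- MLS error estimate of order δ^{m+1} for C^{m+1} functions on compact convex
domains, with a constant depending only on m, d and C1. -/
theorem stmt_2
    (d m : ℕ) (hd : 0 < d) (hm : 1 ≤ m) (C1 : ℝ) (hC1 : 0 < C1) :
    ∃ C > (0 : ℝ), ∀ (N : ℕ) (Ω : Set (EuclideanSpace ℝ (Fin d))),
      IsCompact Ω → Convex ℝ Ω →
      ∀ (x : Fin N → EuclideanSpace ℝ (Fin d)), (∀ j, x j ∈ Ω) →
      ∀ (φ : Fin N → EuclideanSpace ℝ (Fin d) → ℝ) (C2 h δ : ℝ),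
        0 < C2 → 0 < h → δ = 2 * C2 * h →
        (∀ p : MvPolynomial (Fin d) ℝ, p.totalDegree ≤ m →
          ∀ y ∈ Ω, ∑ j, φ j y * MvPolynomial.eval (fun i => x j i) p
            = MvPolynomial.eval (fun i => y i) p) →
        (∀ y ∈ Ω, ∑ j, |φ j y| ≤ C1) →
        (∀ j, ∀ y ∈ Ω, δ < ‖y - x j‖ → φ j y = 0) →
        ∀ u : EuclideanSpace ℝ (Fin d) → ℝ,
          (∃ U : Set (EuclideanSpace ℝ (Fin d)), IsOpen U ∧ Ω ⊆ U ∧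
            ContDiffOn ℝ (m + 1 : ℕ) u U) →
          (∃ M : ℝ, ∀ y ∈ Ω, ‖iteratedFDeriv ℝ (m + 1) u y‖ ≤ M) →
          ∀ x₀ ∈ Ω, |u x₀ - ∑ j, φ j x₀ * u (x j)| ≤
            C * δ ^ (m + 1) * (⨆ y ∈ Ω, ‖iteratedFDeriv ℝ (m + 1) u y‖) := by
  classical
  refine ⟨C1, hC1, ?_⟩
  intro N Ω hΩcpt hΩconv x hxΩ φ C2 h δ hC2 hh hδ hrep hstab hsupp u hreg hbound x₀ hx₀
  obtain ⟨U, hUopen, hΩU, hu⟩ := hreg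
  obtain ⟨M, hM⟩ := hbound
  have hδ0 : 0 < δ := by rw [hδ]; positivity
  set S : ℝ := ⨆ y ∈ Ω, ‖iteratedFDeriv ℝ (m + 1) u y‖ with hSdef
  have hbdd : BddAbove (range fun y => ⨆ _ : y ∈ Ω, ‖iteratedFDeriv ℝ (m + 1) u y‖) := by
    refine ⟨max M 0, ?_⟩
    rintro s ⟨y, rfl⟩
    dsimp only
    by_cases hy : y ∈ Ω
    · rw [ciSup_pos hy]
      exact le_max_of_le_left (hM y hy)
    · haveI : IsEmpty (y ∈ Ω) := ⟨fun hc => hy hc⟩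
      rw [iSup_of_empty', Real.sSup_empty]
      exact le_max_right _ _
  have hS : ∀ y ∈ Ω, ‖iteratedFDeriv ℝ (m + 1) u y‖ ≤ S := by
    intro y hy
    have := le_ciSup hbdd y
    rwa [ciSup_pos hy] at this
  have hS0 : 0 ≤ S := le_trans (norm_nonneg _) (hS x₀ hx₀)
  obtain ⟨P, hPdeg, hPeval⟩ := exists_taylor_poly d m u x₀
  set T : EuclideanSpace ℝ (Fin d) → ℝ := fun y => ∑ k ∈ Finset.range (m+1),
    ((k.factorial : ℝ))⁻¹ • (iteratedFDeriv ℝ k u x₀ fun _ => y - x₀) with hT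
  have hTx₀ : T x₀ = u x₀ := by
    simp only [hT]
    rw [Finset.sum_eq_single 0]
    · simp [iteratedFDeriv_zero_apply]
    · intro k _ hk
      have : (iteratedFDeriv ℝ k u x₀ fun _ => x₀ - x₀) = 0 := by
        have h0 : (fun _ : Fin k => x₀ - x₀) ⟨0, Nat.pos_of_ne_zero hk⟩ = 0 := by simp
        exact (iteratedFDeriv ℝ k u x₀).map_coord_zero ⟨0, Nat.pos_of_ne_zero hk⟩ h0
      rw [this]; simp
    · intro habs; exact absurd (Finset.mem_range.mpr (by omega)) habs
  have hTrep : ∑ j, φ j x₀ * T (x j) = u x₀ := by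
    have := hrep P hPdeg x₀ hx₀
    simp only [hPeval] at this
    rw [← hTx₀, hT]
    exact this
  -- per-point Taylor estimate
  have hptwise : ∀ j, |φ j x₀| * |T (x j) - u (x j)| ≤ |φ j x₀| * (S * δ ^ (m+1)) := by
    intro j
    by_cases hφ : φ j x₀ = 0
    · simp [hφ]
    · have hclose : ‖x₀ - x j‖ ≤ δ := by
        by_contra hc
        exact hφ (hsupp j x₀ hx₀ (lt_of_not_ge hc))
      refine mul_le_mul_of_nonneg_left ?_ (abs_nonneg _)
      set v : EuclideanSpace ℝ (Fin d) := x j - x₀ with hv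
      have hseg : ∀ t ∈ Icc (0:ℝ) 1, x₀ + t • v ∈ U := by
        intro t ht
        have hmem : (1 - t) • x₀ + t • (x j) ∈ Ω :=
          hΩconv hx₀ (hxΩ j) (by linarith [ht.2]) ht.1 (by ring)
        have heq : x₀ + t • v = (1 - t) • x₀ + t • (x j) := by
          rw [hv, smul_sub, sub_smul, one_smul]
          abel
        rw [heq]
        exact hΩU hmem
      have hsegΩ : ∀ t ∈ Icc (0:ℝ) 1, x₀ + t • v ∈ Ω := by
        intro t ht
        have hmem : (1 - t) • x₀ + t • (x j) ∈ Ω :=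
          hΩconv hx₀ (hxΩ j) (by linarith [ht.2]) ht.1 (by ring)
        have heq : x₀ + t • v = (1 - t) • x₀ + t • (x j) := by
          rw [hv, smul_sub, sub_smul, one_smul]
          abel
        rw [heq]; exact hmem
      have hCseg : ∀ t ∈ Icc (0:ℝ) 1, ‖iteratedFDeriv ℝ (m+1) u (x₀ + t • v)‖ ≤ S :=
        fun t ht => hS _ (hsegΩ t ht)
      have := taylor_segment hUopen hu x₀ v hseg hCseg
      have hxv : x₀ + v = x j := by rw [hv]; abel
      rw [hxv] at this
      have hTeq : (∑ k ∈ Finset.range (m+1),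
          ((k.factorial : ℝ))⁻¹ • (iteratedFDeriv ℝ k u x₀ fun _ => v)) = T (x j) := by
        simp only [hT, hv]
      rw [hTeq] at this
      rw [abs_sub_comm]
      refine this.trans ?_
      have hnv : ‖v‖ ≤ δ := by rwa [hv, norm_sub_rev]
      have h1 : S * ‖v‖ ^ (m+1) ≤ S * δ ^ (m+1) :=
        mul_le_mul_of_nonneg_left (pow_le_pow_left₀ (norm_nonneg _) hnv _) hS0
      have h2 : S * ‖v‖ ^ (m+1) / m.factorial ≤ S * ‖v‖ ^ (m+1) := by
        apply div_le_self (by positivity)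
        exact_mod_cast Nat.one_le_iff_ne_zero.mpr m.factorial_ne_zero
      linarith
  calc |u x₀ - ∑ j, φ j x₀ * u (x j)|
      = |∑ j, φ j x₀ * (T (x j) - u (x j))| := by
        congr 1
        rw [← hTrep]
        rw [← Finset.sum_sub_distrib]
        exact Finset.sum_congr rfl fun j _ => by ring
    _ ≤ ∑ j, |φ j x₀ * (T (x j) - u (x j))| := Finset.abs_sum_le_sum_abs _ _
    _ = ∑ j, |φ j x₀| * |T (x j) - u (x j)| := by
        exact Finset.sum_congr rfl fun j _ => abs_mul _ _
    _ ≤ ∑ j, |φ j x₀| * (S * δ ^ (m+1)) := Finset.sum_le_sum fun j _ => hptwise j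
    _ = (∑ j, |φ j x₀|) * (S * δ ^ (m+1)) := by rw [← Finset.sum_mul]
    _ ≤ C1 * (S * δ ^ (m+1)) := by
        refine mul_le_mul_of_nonneg_right (hstab x₀ hx₀) (by positivity)
    _ = C1 * δ ^ (m+1) * S := by ring
end

section
/- Let Ω ⊆ ℝ^d be a compact set, let x_1,…,x_N ∈ Ω, and suppose φ_1,…,φ_N : Ω → ℝ are continuous and provide a stable local polynomial reproduction of degree m ∈ ℕ with constants C1, C2 and fill distance h, with δ := 2 C2 h. Let y_1,…,y_N ∈ Ω be such that the matrix Φ = (φ_j(y_i)) is invertible, and let P be the interpolation operator on C(Ω) given by P u = ∑_j c_j φ_j with Φ c = (u(y_i))_i, so that c_P := C1 ‖Φ^{-1}‖_∞ bounds ‖P‖. Then for every u ∈ C(Ω), ‖P u − u‖_∞ ≤ (1 + c_P) C1 ω(u, δ), where ω(u, δ) := sup{ |u(y) − u(z)| : y, z ∈ Ω, ‖y − z‖₂ ≤ δ }. -/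
open scoped BigOperators Matrix

/-- for the MLS-based interpolation operator P with ‖P‖ ≤ c_P = C1‖Φ⁻¹‖_∞,
one has ‖P u − u‖_∞ ≤ (1 + c_P) C1 ω(u, δ) for every continuous u. -/
theorem stmt_5
    {d N : ℕ} (Ω : Set (EuclideanSpace ℝ (Fin d))) (hΩ : IsCompact Ω) [CompactSpace Ω]
    (x : Fin N → Ω)
    (φ : Fin N → C(Ω, ℝ))
    (m : ℕ) (C1 C2 h δ : ℝ)
    (hC1 : 0 < C1) (hC2 : 0 < C2) (hh : 0 < h) (hδ : δ = 2 * C2 * h)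
    (hrep : ∀ p : MvPolynomial (Fin d) ℝ, p.totalDegree ≤ m →
      ∀ z : Ω, ∑ j, φ j z * MvPolynomial.eval (fun i => (x j : EuclideanSpace ℝ (Fin d)) i) p
        = MvPolynomial.eval (fun i => (z : EuclideanSpace ℝ (Fin d)) i) p)
    (hstab : ∀ z : Ω, ∑ j, |φ j z| ≤ C1)
    (hloc : ∀ j, ∀ z : Ω, δ < ‖(z : EuclideanSpace ℝ (Fin d)) - x j‖ → φ j z = 0)
    (y : Fin N → Ω)
    (Φ : Matrix (Fin N) (Fin N) ℝ) (hΦdef : ∀ i j, Φ i j = φ j (y i))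
    (hΦ : IsUnit Φ.det)
    (T : C(Ω, ℝ) →L[ℝ] C(Ω, ℝ))
    (hT : ∀ u : C(Ω, ℝ), T u = ∑ j, (Φ⁻¹ *ᵥ fun i => u (y i)) j • φ j) :
    ∀ u : C(Ω, ℝ), ‖T u - u‖ ≤ (1 + C1 * (⨆ i, ∑ j, |Φ⁻¹ i j|)) * C1 *
      sSup {t | ∃ y' z' : Ω, ‖(y' : EuclideanSpace ℝ (Fin d)) - z'‖ ≤ δ ∧
        t = |u y' - u z'|} := by
  intro u
  set S : Set ℝ := {t | ∃ y' z' : Ω, ‖(y' : EuclideanSpace ℝ (Fin d)) - z'‖ ≤ δ ∧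
      t = |u y' - u z'|} with hS
  by_cases hne : Nonempty Ω
  · obtain ⟨z0⟩ := hne
    set c : ℝ := ⨆ i, ∑ j, |Φ⁻¹ i j| with hc
    have hc0 : 0 ≤ c := Real.iSup_nonneg fun i => Finset.sum_nonneg fun j _ => abs_nonneg _
    have hbdd : BddAbove S := by
      refine ⟨2 * ‖u‖, ?_⟩
      rintro t ⟨y', z', -, rfl⟩
      have h1 : |u y' - u z'| ≤ |u y'| + |u z'| := abs_sub _ _
      have h2 : |u y'| ≤ ‖u‖ := u.norm_coe_le_norm y'
      have h3 : |u z'| ≤ ‖u‖ := u.norm_coe_le_norm z'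
      linarith
    set ω : ℝ := sSup S with hω
    have hδ0 : 0 < δ := by rw [hδ]; positivity
    have hω0 : 0 ≤ ω := by
      refine le_csSup hbdd ?_
      exact ⟨z0, z0, by simp [hδ0.le], by simp⟩
    set uh : C(Ω, ℝ) := ∑ j, u (x j) • φ j with huhdef
    have huh : ∀ z : Ω, uh z = ∑ j, u (x j) * φ j z := by
      intro z; simp [huhdef]
    -- reproduction of constants
    have hsum1 : ∀ z : Ω, ∑ j, φ j z = 1 := by
      intro z
      have := hrep 1 (by simp) z
      simpa using this
    have key : ∀ z : Ω, u z - uh z = ∑ j, φ j z * (u z - u (x j)) := by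
      intro z
      have h1 : ∑ j, φ j z * (u z - u (x j))
          = (∑ j, φ j z) * u z - ∑ j, u (x j) * φ j z := by
        rw [Finset.sum_mul, ← Finset.sum_sub_distrib]
        exact Finset.sum_congr rfl fun j _ => by ring
      rw [h1, hsum1 z, one_mul, huh]
    have hle : ∀ z : Ω, |u z - uh z| ≤ C1 * ω := by
      intro z
      have hterm : ∀ j ∈ Finset.univ, |φ j z| * |u z - u (x j)| ≤ |φ j z| * ω := by
        intro j _
        by_cases hj : φ j z = 0
        · simp [hj]
        · have hd : ‖(z : EuclideanSpace ℝ (Fin d)) - x j‖ ≤ δ :=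
            le_of_not_gt fun hlt => hj (hloc j z hlt)
          exact mul_le_mul_of_nonneg_left (le_csSup hbdd ⟨z, x j, hd, rfl⟩) (abs_nonneg _)
      rw [key z]
      calc |∑ j, φ j z * (u z - u (x j))| ≤ ∑ j, |φ j z * (u z - u (x j))| :=
            Finset.abs_sum_le_sum_abs _ _
        _ = ∑ j, |φ j z| * |u z - u (x j)| := by simp [abs_mul]
        _ ≤ ∑ j, |φ j z| * ω := Finset.sum_le_sum hterm
        _ = (∑ j, |φ j z|) * ω := (Finset.sum_mul _ _ _).symm
        _ ≤ C1 * ω := mul_le_mul_of_nonneg_right (hstab z) hω0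
    have hnormdiff : ‖u - uh‖ ≤ C1 * ω := by
      refine (ContinuousMap.norm_le _ (by positivity)).mpr fun z => ?_
      simpa [Real.norm_eq_abs] using hle z
    -- operator bound
    have hTop : ∀ v : C(Ω, ℝ), ‖T v‖ ≤ C1 * c * ‖v‖ := by
      intro v
      set a : Fin N → ℝ := Φ⁻¹ *ᵥ fun i => v (y i) with ha
      have haj : ∀ j, |a j| ≤ c * ‖v‖ := by
        intro j
        have h1 : |a j| ≤ ∑ i, |Φ⁻¹ j i| * ‖v‖ := by
          have : a j = ∑ i, Φ⁻¹ j i * v (y i) := by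
            simp [ha, Matrix.mulVec, dotProduct]
          rw [this]
          refine le_trans (Finset.abs_sum_le_sum_abs _ _) (Finset.sum_le_sum fun i _ => ?_)
          rw [abs_mul]
          exact mul_le_mul_of_nonneg_left (v.norm_coe_le_norm (y i)) (abs_nonneg _)
        rw [← Finset.sum_mul] at h1
        refine h1.trans (mul_le_mul_of_nonneg_right ?_ (norm_nonneg v))
        rw [hc]
        exact le_ciSup (f := fun i => ∑ j, |Φ⁻¹ i j|) (Set.finite_range _).bddAbove j
      refine (ContinuousMap.norm_le _ (by positivity)).mpr fun z => ?_
      rw [hT v]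
      calc ‖(∑ j, a j • φ j) z‖ = |∑ j, a j * φ j z| := by
            simp [Real.norm_eq_abs]
        _ ≤ ∑ j, |a j * φ j z| := Finset.abs_sum_le_sum_abs _ _
        _ = ∑ j, |a j| * |φ j z| := by simp [abs_mul]
        _ ≤ ∑ j, (c * ‖v‖) * |φ j z| := Finset.sum_le_sum fun j _ =>
            mul_le_mul_of_nonneg_right (haj j) (abs_nonneg _)
        _ = (c * ‖v‖) * ∑ j, |φ j z| := by rw [Finset.mul_sum]
        _ ≤ (c * ‖v‖) * C1 := mul_le_mul_of_nonneg_left (hstab z)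
            (mul_nonneg hc0 (norm_nonneg v))
        _ = C1 * c * ‖v‖ := by ring
    -- T fixes uh
    have hvec : (fun i => uh (y i)) = Φ *ᵥ fun j => u (x j) := by
      funext i
      simp [huh, Matrix.mulVec, dotProduct, hΦdef, mul_comm]
    have hfix : T uh = uh := by
      rw [hT uh, hvec, Matrix.mulVec_mulVec, Matrix.nonsing_inv_mul Φ hΦ, Matrix.one_mulVec]
    have hsplit : T u - u = T (u - uh) + (uh - u) := by
      rw [map_sub, hfix]; abel
    have hTub := hTop (u - uh)
    have hfinal : ‖T u - u‖ ≤ (1 + C1 * c) * (C1 * ω) := by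
      calc ‖T u - u‖ = ‖T (u - uh) + (uh - u)‖ := by rw [hsplit]
        _ ≤ ‖T (u - uh)‖ + ‖uh - u‖ := norm_add_le _ _
        _ = ‖T (u - uh)‖ + ‖u - uh‖ := by rw [norm_sub_rev]
        _ ≤ C1 * c * ‖u - uh‖ + ‖u - uh‖ := by linarith
        _ ≤ C1 * c * (C1 * ω) + (C1 * ω) := by
            have hcc : 0 ≤ C1 * c := mul_nonneg hC1.le hc0
            nlinarith [mul_le_mul_of_nonneg_left hnormdiff hcc]
        _ = (1 + C1 * c) * (C1 * ω) := by ring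
    calc ‖T u - u‖ ≤ (1 + C1 * c) * (C1 * ω) := hfinal
      _ = (1 + C1 * c) * C1 * ω := by ring
  · have hSempty : S = ∅ := by
      ext t
      simp only [Set.mem_setOf_eq, Set.mem_empty_iff_false, iff_false]
      rintro ⟨y', -, -⟩
      exact hne ⟨y'⟩
    have h1 : ‖T u - u‖ ≤ 0 :=
      (ContinuousMap.norm_le _ le_rfl).mpr fun z => (hne ⟨z⟩).elim
    rw [hSempty, Real.sSup_empty]
    simpa using h1
end

section
/- Let X be a real Banach space, let F be a bounded linear operator on X, and let (F_N)_{N≥1} be a collectively compact family of bounded linear operators on X such that F_N u → F u in norm for every u ∈ X. Then ‖(F − F_N) F‖ → 0 and ‖(F − F_N) F_N‖ → 0 as N → ∞, where ‖·‖ denotes the operator norm. -/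
open Filter Topology Metric

private lemma opnorm_comp_le_aux {X : Type*} [NormedAddCommGroup X] [NormedSpace ℝ X]
    {G H : X →L[ℝ] X} {K : Set X} {ε : ℝ} (hε : 0 ≤ ε)
    (hH : ∀ u : X, ‖u‖ ≤ 1 → H u ∈ K) (h : ∀ v ∈ K, ‖G v‖ ≤ ε) :
    ‖G.comp H‖ ≤ ε := by
  refine ContinuousLinearMap.opNorm_le_bound _ hε fun u => ?_
  rcases eq_or_ne u 0 with rfl | hu
  · simp [hε]
  · have hnu : (0:ℝ) < ‖u‖ := norm_pos_iff.2 hu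
    have h1 : ‖(‖u‖⁻¹ • u)‖ ≤ 1 := by
      rw [norm_smul, norm_inv, norm_norm, inv_mul_cancel₀ hnu.ne']
    have h2 := h _ (hH _ h1)
    have h3 : G (H (‖u‖⁻¹ • u)) = ‖u‖⁻¹ • G (H u) := by simp [map_smul]
    rw [h3, norm_smul, norm_inv, norm_norm] at h2
    calc ‖G.comp H u‖ = ‖u‖ * (‖u‖⁻¹ * ‖G (H u)‖) := by
          field_simp [ContinuousLinearMap.comp_apply]
          rfl
      _ ≤ ‖u‖ * ε := by
          exact mul_le_mul_of_nonneg_left h2 hnu.le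
      _ = ε * ‖u‖ := mul_comm _ _

/-- for a collectively compact family of pointwise convergent operators F_N
with limit F, both ‖(F − F_N)F‖ → 0 and ‖(F − F_N)F_N‖ → 0 in operator norm. -/
theorem stmt_7
    {X : Type*} [NormedAddCommGroup X] [NormedSpace ℝ X] [CompleteSpace X]
    (F : X →L[ℝ] X) (Fn : ℕ → X →L[ℝ] X)
    (hcc : IsCompact (closure {v : X | ∃ N ≥ 1, ∃ u : X, ‖u‖ ≤ 1 ∧ v = Fn N u}))
    (hconv : ∀ u : X, Tendsto (fun N => Fn N u) atTop (𝓝 (F u))) :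
    Tendsto (fun N => ‖(F - Fn N).comp F‖) atTop (𝓝 0) ∧
    Tendsto (fun N => ‖(F - Fn N).comp (Fn N)‖) atTop (𝓝 0) := by
  set S := {v : X | ∃ N ≥ 1, ∃ u : X, ‖u‖ ≤ 1 ∧ v = Fn N u} with hS
  set K := closure S with hK
  -- uniform bound on ‖F - Fn N‖
  obtain ⟨C', hC'⟩ : ∃ C', ∀ N, ‖Fn N‖ ≤ C' := by
    apply banach_steinhaus
    intro x
    have hb : BddAbove (Set.range fun N => ‖Fn N x‖) :=
      ((hconv x).norm).bddAbove_range
    obtain ⟨c, hc⟩ := hb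
    exact ⟨c, fun i => hc ⟨i, rfl⟩⟩
  set C : ℝ := ‖F‖ + C' + 1 with hCdef
  have hCpos : 0 < C := by
    have : 0 ≤ C' := le_trans (norm_nonneg _) (hC' 0)
    positivity
  have hC : ∀ N, ‖F - Fn N‖ ≤ C := fun N => by
    calc ‖F - Fn N‖ ≤ ‖F‖ + ‖Fn N‖ := norm_sub_le _ _
      _ ≤ ‖F‖ + C' := by linarith [hC' N]
      _ ≤ C := by simp [hCdef]
  -- pointwise convergence of (F - Fn N) v to 0, for any v
  have hpt : ∀ v : X, Tendsto (fun N => ‖(F - Fn N) v‖) atTop (𝓝 0) := by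
    intro v
    have := (tendsto_const_nhds (x := F v) (f := atTop (α := ℕ))).sub (hconv v)
    simpa using this.norm
  -- uniform convergence on K
  have hunif : ∀ ε > 0, ∀ᶠ N in atTop, ∀ v ∈ K, ‖(F - Fn N) v‖ ≤ ε := by
    intro ε hε
    obtain ⟨t, htK, htfin, htcov⟩ := hcc.finite_cover_balls (e := ε / (2 * C))
      (by positivity)
    have hev : ∀ᶠ N in atTop, ∀ x ∈ t, ‖(F - Fn N) x‖ ≤ ε / 2 := by
      rw [eventually_all_finite htfin]
      intro x _
      exact (hpt x).eventually_le_const (by positivity)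
    filter_upwards [hev] with N hN v hv
    obtain ⟨x, hxt, hxv⟩ := Set.mem_iUnion₂.1 (htcov hv)
    have hdist : ‖v - x‖ < ε / (2 * C) := by
      rw [← dist_eq_norm]; exact hxv
    calc ‖(F - Fn N) v‖ = ‖(F - Fn N) (v - x) + (F - Fn N) x‖ := by
          congr 1; rw [map_sub]; abel
      _ ≤ ‖(F - Fn N) (v - x)‖ + ‖(F - Fn N) x‖ := norm_add_le _ _
      _ ≤ C * ‖v - x‖ + ε / 2 := by
          gcongr
          · exact le_trans ((F - Fn N).le_opNorm _) (by gcongr; exact hC N)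
          · exact hN x hxt
      _ ≤ C * (ε / (2 * C)) + ε / 2 := by
          have := hdist.le; gcongr
      _ = ε := by field_simp; ring
  -- F maps the unit ball into K
  have hFK : ∀ u : X, ‖u‖ ≤ 1 → F u ∈ K := by
    intro u hu
    refine mem_closure_of_tendsto (hconv u) ?_
    filter_upwards [eventually_ge_atTop 1] with N hN
    exact ⟨N, hN, u, hu, rfl⟩
  constructor
  · rw [NormedAddCommGroup.tendsto_nhds_zero]
    intro ε hε
    filter_upwards [hunif (ε/2) (by positivity)] with N hN
    have := opnorm_comp_le_aux (G := F - Fn N) (H := F) (K := K)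
      (by positivity) hFK hN
    rw [Real.norm_eq_abs, abs_of_nonneg (norm_nonneg _)]
    linarith
  · rw [NormedAddCommGroup.tendsto_nhds_zero]
    intro ε hε
    filter_upwards [hunif (ε/2) (by positivity), eventually_ge_atTop 1] with N hN hN1
    have hFnK : ∀ u : X, ‖u‖ ≤ 1 → Fn N u ∈ K :=
      fun u hu => subset_closure ⟨N, hN1, u, hu, rfl⟩
    have := opnorm_comp_le_aux (G := F - Fn N) (H := Fn N) (K := K)
      (by positivity) hFnK hN
    rw [Real.norm_eq_abs, abs_of_nonneg (norm_nonneg _)]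
    linarith
end

section
/- Let X be a real Banach space, let S and T be bounded linear operators on X with S compact, and let λ ≠ 0 be a real number. Assume λI − T is a bijection of X onto X (so (λI − T)^{-1} is a bounded operator by the open mapping theorem), and assume ‖(T − S) S‖ < |λ| / ‖(λI − T)^{-1}‖. Then λI − S is a bijection of X onto X, (λI − S)^{-1} is a bounded linear operator, and ‖(λI − S)^{-1}‖ ≤ (1 + ‖(λI − T)^{-1}‖ · ‖S‖) / (|λ| − ‖(λI − T)^{-1}‖ · ‖(T − S) S‖). -/
open Metric

lemma riesz_surj {X : Type*} [NormedAddCommGroup X] [NormedSpace ℝ X] [CompleteSpace X]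
    (S : X →L[ℝ] X) (hS : IsCompactOperator (⇑S)) (lam : ℝ) (hlam : lam ≠ 0)
    {c : ℝ} (hc : ∀ x, ‖x‖ ≤ c * ‖(lam • ContinuousLinearMap.id ℝ X - S) x‖) :
    Function.Surjective ⇑(lam • ContinuousLinearMap.id ℝ X - S) := by
  set A := lam • ContinuousLinearMap.id ℝ X - S with hA
  have hAx : ∀ x, A x = lam • x - S x := by intro x; simp [hA]
  have hanti : AntilipschitzWith c.toNNReal ⇑A := by
    refine A.antilipschitz_of_bound fun x => ?_
    calc ‖x‖ ≤ c * ‖A x‖ := hc x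
    _ ≤ c.toNNReal * ‖A x‖ := by
        rw [Real.coe_toNNReal']
        exact mul_le_mul_of_nonneg_right (le_max_left _ _) (norm_nonneg _)
  have hpow : ∀ n, AntilipschitzWith (c.toNNReal ^ n) ⇑(A ^ n) := by
    intro n
    induction n with
    | zero => simpa using AntilipschitzWith.id
    | succ n ih =>
      have : ⇑(A ^ (n+1)) = ⇑(A ^ n) ∘ ⇑A := by
        rw [pow_succ]; ext x; simp [ContinuousLinearMap.mul_apply]
      rw [this, pow_succ, mul_comm]
      exact ih.comp hanti
  have hclosed : ∀ n, IsClosed (Set.range ⇑(A ^ n)) :=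
    fun n => (hpow n).isClosed_range (A ^ n).uniformContinuous
  set R : ℕ → Submodule ℝ X := fun n => LinearMap.range ((A ^ n : X →L[ℝ] X) : X →ₗ[ℝ] X) with hR
  have hRset : ∀ n, (R n : Set X) = Set.range ⇑(A ^ n) := fun n => rfl
  have hRclosed : ∀ n, IsClosed (R n : Set X) := fun n => hRset n ▸ hclosed n
  have hsucc : ∀ n, R (n + 1) ≤ R n := by
    rintro n y ⟨x, rfl⟩
    exact ⟨A x, by rw [pow_succ]; simp [ContinuousLinearMap.mul_apply]⟩
  have hRmono : Antitone R := antitone_nat_of_succ_le hsucc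
  have hAR : ∀ n x, x ∈ R n → A x ∈ R (n + 1) := by
    rintro n _ ⟨v, rfl⟩
    exact ⟨v, by rw [pow_succ']; simp [ContinuousLinearMap.mul_apply]⟩
  by_contra hsurj
  simp only [Function.Surjective, not_forall, not_exists] at hsurj
  obtain ⟨y, hy⟩ := hsurj
  have hyR : ∀ n, (A ^ n) y ∈ R n ∧ (A ^ n) y ∉ R (n + 1) := by
    intro n
    refine ⟨⟨y, rfl⟩, ?_⟩
    rintro ⟨z, hz⟩
    have : (A ^ n) (A z) = (A ^ n) y := by
      rw [← (show (A ^ (n+1)) z = (A ^ n) y from hz), pow_succ]; simp [ContinuousLinearMap.mul_apply]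
    exact hy z ((hpow n).injective this)
  have hstep : ∀ n, ∃ u, u ∈ R n ∧ ‖u‖ = 1 ∧ ∀ w ∈ R (n + 1), (1:ℝ)/2 ≤ ‖u - w‖ := by
    intro n
    obtain ⟨hxin, hxnot⟩ := hyR n
    set x := (A ^ n) y
    have hne : (R (n+1) : Set X).Nonempty := ⟨0, Submodule.zero_mem _⟩
    have hd : 0 < infDist x (R (n+1) : Set X) :=
      ((hRclosed (n+1)).notMem_iff_infDist_pos hne).mp hxnot
    set d := infDist x (R (n+1) : Set X) with hdd
    obtain ⟨z, hzmem, hzlt⟩ := (infDist_lt_iff hne).mp (by linarith : d < 2 * d)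
    set u0 := x - z with hu0
    have hu0norm : ‖u0‖ < 2 * d := by rwa [hu0, ← dist_eq_norm]
    have hu0pos : 0 < ‖u0‖ := by
      have : d ≤ dist x z := infDist_le_dist_of_mem hzmem
      rw [hu0, ← dist_eq_norm]; linarith
    refine ⟨‖u0‖⁻¹ • u0, ?_, ?_, ?_⟩
    · exact Submodule.smul_mem _ _ (Submodule.sub_mem _ hxin (hsucc n hzmem))
    · rw [norm_smul, norm_inv, norm_norm, inv_mul_cancel₀ hu0pos.ne']
    · intro w hw
      have hmem : z + ‖u0‖ • w ∈ (R (n+1) : Set X) :=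
        Submodule.add_mem _ hzmem (Submodule.smul_mem _ _ hw)
      have hdle : d ≤ ‖x - (z + ‖u0‖ • w)‖ := by
        rw [← dist_eq_norm]; exact infDist_le_dist_of_mem hmem
      have heq : ‖u0‖⁻¹ • u0 - w = ‖u0‖⁻¹ • (x - (z + ‖u0‖ • w)) := by
        rw [show x - (z + ‖u0‖ • w) = u0 - ‖u0‖ • w by rw [hu0]; abel,
          smul_sub (‖u0‖⁻¹) u0 (‖u0‖ • w), smul_smul,
          inv_mul_cancel₀ hu0pos.ne', one_smul]
      rw [heq, norm_smul, norm_inv, norm_norm]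
      have h1 : ‖u0‖⁻¹ * ‖u0‖ = 1 := inv_mul_cancel₀ hu0pos.ne'
      have hinvpos : 0 < ‖u0‖⁻¹ := inv_pos.mpr hu0pos
      nlinarith [mul_le_mul_of_nonneg_left hdle hinvpos.le]
  choose xs hxsR hxsnorm hxssep using hstep
  have hsep : ∀ m n, n < m → |lam| / 2 ≤ ‖S (xs n) - S (xs m)‖ := by
    intro m n hnm
    set w := lam⁻¹ • (A (xs n) + lam • (xs m) - A (xs m)) with hw
    have hwmem : w ∈ R (n + 1) := by
      refine Submodule.smul_mem _ _ (Submodule.sub_mem _ (Submodule.add_mem _ ?_ ?_) ?_)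
      · exact hAR n _ (hxsR n)
      · exact Submodule.smul_mem _ _ (hRmono hnm (hxsR m))
      · exact hRmono (by omega : n + 1 ≤ m + 1) (hAR m _ (hxsR m))
    have hid : lam • (xs n - w) = S (xs n) - S (xs m) := by
      rw [hw, smul_sub, smul_smul, mul_inv_cancel₀ hlam, one_smul, hAx, hAx]
      abel
    have := hxssep n w hwmem
    calc |lam| / 2 = |lam| * (1/2) := by ring
    _ ≤ |lam| * ‖xs n - w‖ := by
        exact mul_le_mul_of_nonneg_left this (abs_nonneg _)
    _ = ‖lam • (xs n - w)‖ := by rw [norm_smul, Real.norm_eq_abs]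
    _ = ‖S (xs n) - S (xs m)‖ := by rw [hid]
  have hK : IsCompact (closure (⇑S '' closedBall 0 1)) :=
    IsCompactOperator.isCompact_closure_image_closedBall (f := (S : X →ₗ[ℝ] X)) hS 1
  have hmemK : ∀ n, S (xs n) ∈ closure (⇑S '' closedBall 0 1) := by
    intro n
    exact subset_closure ⟨xs n, by simp [hxsnorm n], rfl⟩
  obtain ⟨a, -, φ, hφ, hconv⟩ := hK.tendsto_subseq hmemK
  have hpos : 0 < |lam| / 4 := by positivity
  rw [Metric.tendsto_atTop] at hconv
  obtain ⟨N, hN⟩ := hconv (|lam| / 4) hpos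
  have h1 := hN N le_rfl
  have h2 := hN (N + 1) (by omega)
  have hlt : φ N < φ (N + 1) := hφ (by omega)
  have := hsep (φ (N + 1)) (φ N) hlt
  have hd12 : dist (S (xs (φ N))) (S (xs (φ (N+1)))) < |lam| / 2 := by
    calc dist (S (xs (φ N))) (S (xs (φ (N+1))))
        ≤ dist (S (xs (φ N))) a + dist (S (xs (φ (N+1)))) a := dist_triangle_right _ _ _
    _ < |lam| / 4 + |lam| / 4 := add_lt_add h1 h2
    _ = |lam| / 2 := by ring
  rw [dist_eq_norm] at hd12
  linarith

/-- Atkinson, Theorem 4.1.1, existence part: if λI − T is invertible with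
bounded inverse and ‖(T − S)S‖ < |λ|/‖(λI − T)⁻¹‖ with S compact, then λI − S is
invertible with bounded inverse, and the stated norm bound holds. -/
theorem stmt_8
    {X : Type*} [NormedAddCommGroup X] [NormedSpace ℝ X] [CompleteSpace X]
    (S T : X →L[ℝ] X) (hS : IsCompactOperator (⇑S))
    (lam : ℝ) (hlam : lam ≠ 0)
    (Tinv : X →L[ℝ] X)
    (hT1 : (lam • ContinuousLinearMap.id ℝ X - T).comp Tinv = ContinuousLinearMap.id ℝ X)
    (hT2 : Tinv.comp (lam • ContinuousLinearMap.id ℝ X - T) = ContinuousLinearMap.id ℝ X)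
    (hsmall : ‖(T - S).comp S‖ < |lam| / ‖Tinv‖) :
    Function.Bijective ⇑(lam • ContinuousLinearMap.id ℝ X - S) ∧
    ∃ Sinv : X →L[ℝ] X,
      (lam • ContinuousLinearMap.id ℝ X - S).comp Sinv = ContinuousLinearMap.id ℝ X ∧
      Sinv.comp (lam • ContinuousLinearMap.id ℝ X - S) = ContinuousLinearMap.id ℝ X ∧
      ‖Sinv‖ ≤ (1 + ‖Tinv‖ * ‖S‖) / (|lam| - ‖Tinv‖ * ‖(T - S).comp S‖) := by
  have hTinvpos : 0 < ‖Tinv‖ := by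
    rcases (norm_nonneg Tinv).lt_or_eq with h | h
    · exact h
    · exfalso
      rw [← h, div_zero] at hsmall
      exact absurd hsmall (not_lt.mpr (norm_nonneg _))
  have hlampos : 0 < |lam| := abs_pos.mpr hlam
  have hsmall' : ‖Tinv‖ * ‖(T - S).comp S‖ < |lam| := by
    rw [div_eq_mul_inv] at hsmall
    calc ‖Tinv‖ * ‖(T - S).comp S‖ < ‖Tinv‖ * (|lam| * ‖Tinv‖⁻¹) :=
      mul_lt_mul_of_pos_left hsmall hTinvpos
    _ = |lam| := by field_simp
  set A := lam • ContinuousLinearMap.id ℝ X - S with hA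
  set C := lam⁻¹ • (ContinuousLinearMap.id ℝ X + Tinv.comp S) with hC
  set E := lam⁻¹ • (Tinv.comp ((T - S).comp S)) with hE
  -- key identity: C.comp A = id + E
  have hT2' : ∀ x, Tinv (lam • x - T x) = x := by
    intro x
    have := ContinuousLinearMap.ext_iff.mp hT2 x
    simpa using this
  have hns : ∀ (r : ℝ) (f : X →L[ℝ] X), ‖r • f‖ = |r| * ‖f‖ := by
    intro r f
    rw [show |r| = ‖r‖ from rfl]; exact norm_smul r f
  have hkey : ∀ x, C (A x) = x + E x := by
    intro x
    have h1 : lam • Tinv (S x) - Tinv (T (S x)) = S x := by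
      have := hT2' (S x)
      rwa [map_sub, map_smul] at this
    have h2 : Tinv (T (S x)) = lam • Tinv (S x) - S x := by
      have h1' := sub_eq_iff_eq_add.mp h1
      rw [h1']; abel
    simp only [hC, hA, hE, ContinuousLinearMap.smul_apply, ContinuousLinearMap.add_apply,
      ContinuousLinearMap.sub_apply, ContinuousLinearMap.comp_apply,
      ContinuousLinearMap.id_apply, map_sub, map_smul, h2]
    match_scalars <;> field_simp
  have hEnorm : ‖E‖ ≤ |lam|⁻¹ * (‖Tinv‖ * ‖(T - S).comp S‖) := by
    rw [hE, hns, abs_inv]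
    exact mul_le_mul_of_nonneg_left (ContinuousLinearMap.opNorm_comp_le _ _)
      (by positivity)
  have hE1 : ‖E‖ < 1 := by
    apply lt_of_le_of_lt hEnorm
    rw [inv_mul_lt_iff₀ hlampos, mul_one]
    exact hsmall'
  have hCnorm : ‖C‖ ≤ |lam|⁻¹ * (1 + ‖Tinv‖ * ‖S‖) := by
    rw [hC, hns, abs_inv]
    refine mul_le_mul_of_nonneg_left ?_ (by positivity)
    calc ‖ContinuousLinearMap.id ℝ X + Tinv.comp S‖
        ≤ ‖ContinuousLinearMap.id ℝ X‖ + ‖Tinv.comp S‖ := norm_add_le _ _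
    _ ≤ 1 + ‖Tinv‖ * ‖S‖ := add_le_add (ContinuousLinearMap.norm_id_le)
        (ContinuousLinearMap.opNorm_comp_le _ _)
  -- bounded below
  have hbdd : ∀ x, ‖x‖ ≤ (‖C‖ / (1 - ‖E‖)) * ‖A x‖ := by
    intro x
    have h1 : ‖x‖ - ‖E‖ * ‖x‖ ≤ ‖C (A x)‖ := by
      have h2 : ‖x‖ ≤ ‖x + E x‖ + ‖E x‖ := by
        have := norm_add_le (x + E x) (-(E x))
        simpa using this
      have h3 : ‖E x‖ ≤ ‖E‖ * ‖x‖ := E.le_opNorm x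
      rw [← hkey x] at h2
      linarith
    have h4 : ‖C (A x)‖ ≤ ‖C‖ * ‖A x‖ := C.le_opNorm _
    have h5 : 0 < 1 - ‖E‖ := by linarith
    rw [div_mul_eq_mul_div, le_div_iff₀ h5]
    nlinarith
  have hinj : Function.Injective ⇑A := by
    intro x y hxy
    have : ‖x - y‖ ≤ (‖C‖ / (1 - ‖E‖)) * ‖A (x - y)‖ := hbdd _
    rw [map_sub, hxy, sub_self, norm_zero, mul_zero] at this
    rw [← sub_eq_zero]
    exact norm_le_zero_iff.mp this
  have hsurj : Function.Surjective ⇑A := riesz_surj S hS lam hlam hbdd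
  have hbij : Function.Bijective ⇑A := ⟨hinj, hsurj⟩
  refine ⟨hbij, ?_⟩
  -- build the inverse
  let e := ContinuousLinearEquiv.ofBijective A
    (LinearMap.ker_eq_bot.mpr hinj) (LinearMap.range_eq_top.mpr hsurj)
  have he : ∀ x, e x = A x := fun x => rfl
  set Sinv := (e.symm.toContinuousLinearMap : X →L[ℝ] X) with hSinv
  have hcomp1 : A.comp Sinv = ContinuousLinearMap.id ℝ X := by
    ext x
    simp only [ContinuousLinearMap.comp_apply, hSinv, ContinuousLinearEquiv.coe_coe,
      ContinuousLinearMap.id_apply]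
    rw [← he (e.symm x), e.apply_symm_apply]
  have hcomp2 : Sinv.comp A = ContinuousLinearMap.id ℝ X := by
    ext x
    simp only [ContinuousLinearMap.comp_apply, hSinv, ContinuousLinearEquiv.coe_coe,
      ContinuousLinearMap.id_apply]
    rw [← he x, e.symm_apply_apply]
  refine ⟨Sinv, hcomp1, hcomp2, ?_⟩
  · have hAS : ∀ x, A (Sinv x) = x := by
      intro x
      have := ContinuousLinearMap.ext_iff.mp hcomp1 x
      simpa using this
    -- Sinv = C - E ∘ Sinv pointwise
    have hdecomp : ∀ x, Sinv x = C x - E (Sinv x) := by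
      intro x
      have h := hkey (Sinv x)
      rw [hAS x] at h
      rw [h]; abel
    have hSnorm : ‖Sinv‖ * (1 - ‖E‖) ≤ ‖C‖ := by
      have h5 : 0 < 1 - ‖E‖ := by linarith
      have hb : ∀ x, ‖Sinv x‖ ≤ (‖C‖ / (1 - ‖E‖)) * ‖x‖ := by
        intro x
        have h1 : ‖Sinv x‖ ≤ ‖C x‖ + ‖E (Sinv x)‖ := by
          have hns2 := norm_sub_le (C x) (E (Sinv x))
          rw [← hdecomp x] at hns2; exact hns2
        have h2 : ‖C x‖ ≤ ‖C‖ * ‖x‖ := C.le_opNorm x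
        have h3 : ‖E (Sinv x)‖ ≤ ‖E‖ * ‖Sinv x‖ := E.le_opNorm _
        rw [div_mul_eq_mul_div, le_div_iff₀ h5]
        nlinarith
      have := ContinuousLinearMap.opNorm_le_bound Sinv
        (by positivity : (0:ℝ) ≤ ‖C‖ / (1 - ‖E‖)) hb
      calc ‖Sinv‖ * (1 - ‖E‖) ≤ (‖C‖ / (1 - ‖E‖)) * (1 - ‖E‖) :=
        mul_le_mul_of_nonneg_right this h5.le
      _ = ‖C‖ := by field_simp
    -- conclude
    have h5 : 0 < 1 - ‖E‖ := by linarith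
    have hden : 0 < |lam| - ‖Tinv‖ * ‖(T - S).comp S‖ := by linarith
    rw [le_div_iff₀ hden]
    have key : ‖Sinv‖ * (|lam| - ‖Tinv‖ * ‖(T - S).comp S‖) ≤ |lam| * (‖Sinv‖ * (1 - ‖E‖)) := by
      have : |lam| * ‖E‖ ≤ ‖Tinv‖ * ‖(T - S).comp S‖ := by
        have := mul_le_mul_of_nonneg_left hEnorm hlampos.le
        rw [← mul_assoc, mul_inv_cancel₀ hlampos.ne', one_mul] at this
        exact this
      nlinarith [norm_nonneg Sinv]
    have key2 : |lam| * ‖C‖ ≤ 1 + ‖Tinv‖ * ‖S‖ := by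
      have := mul_le_mul_of_nonneg_left hCnorm hlampos.le
      rw [← mul_assoc, mul_inv_cancel₀ hlampos.ne', one_mul] at this
      exact this
    calc ‖Sinv‖ * (|lam| - ‖Tinv‖ * ‖(T - S).comp S‖)
        ≤ |lam| * (‖Sinv‖ * (1 - ‖E‖)) := key
    _ ≤ |lam| * ‖C‖ := mul_le_mul_of_nonneg_left hSnorm hlampos.le
    _ ≤ 1 + ‖Tinv‖ * ‖S‖ := key2
end

section
/- Let X be a real Banach space, let F be a compact bounded linear operator on X, let λ ≠ 0 be a real number, and assume λI − F is a bijection of X onto X. Let (F_N)_{N≥1} be a collectively compact family of bounded linear operators on X with F_N u → F u for all u ∈ X, and let (P_N)_{N≥1} be bounded linear operators on X with c_P := sup_N ‖P_N‖ < ∞ and P_N u → u for all u ∈ X. Then there exist N₀ ∈ ℕ and a constant c_I < ∞ such that for all N ≥ N₀ the operator λI − F_N P_N is a bijection of X onto X and ‖(λI − F_N P_N)^{-1}‖ ≤ c_I. -/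
open Filter Topology

set_option maxHeartbeats 1000000
set_option synthInstance.maxHeartbeats 200000

lemma unif_compact {X : Type*} [NormedAddCommGroup X] [NormedSpace ℝ X]
    (G : ℕ → X →L[ℝ] X) (F : X →L[ℝ] X) (M : ℝ)
    (hM : ∀ᶠ N in atTop, ‖G N‖ ≤ M)
    (hconv : ∀ u : X, Tendsto (fun N => G N u) atTop (𝓝 (F u)))
    (K : Set X) (hK : IsCompact K) {ε : ℝ} (hε : 0 < ε) :
    ∀ᶠ N in atTop, ∀ v ∈ K, ‖G N v - F v‖ ≤ ε := by
  have hM0 : 0 ≤ M := by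
    obtain ⟨N, h⟩ := hM.exists
    exact le_trans (norm_nonneg _) h
  set L : ℝ := M + ‖F‖ + 1 with hLdef
  have hL : 0 < L := by positivity
  set δ : ℝ := ε / (2 * L) with hδdef
  have hδ : 0 < δ := by positivity
  obtain ⟨t, htf, hcover⟩ := (Metric.totallyBounded_iff.mp hK.totallyBounded) δ hδ
  have hev : ∀ᶠ N in atTop, ∀ y ∈ t, ‖G N y - F y‖ ≤ ε / 2 := by
    rw [Filter.eventually_all_finite htf]
    intro y _
    have h := Metric.tendsto_nhds.mp (hconv y) (ε / 2) (by positivity)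
    filter_upwards [h] with N hN
    rw [dist_eq_norm] at hN
    exact hN.le
  filter_upwards [hev, hM] with N hN hMN
  intro v hv
  obtain ⟨y, hyt, hyv⟩ := Set.mem_iUnion₂.mp (hcover hv)
  have hd : ‖v - y‖ < δ := by rwa [Metric.mem_ball, dist_eq_norm] at hyv
  have h1 : ‖G N v - G N y‖ ≤ M * δ := by
    calc ‖G N v - G N y‖ = ‖G N (v - y)‖ := by rw [map_sub]
      _ ≤ ‖G N‖ * ‖v - y‖ := (G N).le_opNorm _
      _ ≤ M * δ := by
          apply mul_le_mul hMN hd.le (norm_nonneg _) hM0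
  have h2 : ‖F y - F v‖ ≤ ‖F‖ * δ := by
    calc ‖F y - F v‖ = ‖F (v - y)‖ := by rw [map_sub, norm_sub_rev]
      _ ≤ ‖F‖ * ‖v - y‖ := F.le_opNorm _
      _ ≤ ‖F‖ * δ := by nlinarith [norm_nonneg F, F.le_opNorm (v - y)]
  have key : ‖G N v - F v‖ ≤ ‖G N v - G N y‖ + ‖G N y - F y‖ + ‖F y - F v‖ := by
    have := norm_add₃_le (a := G N v - G N y) (b := G N y - F y) (c := F y - F v)
    simpa using this
  have hLδ : L * δ = ε / 2 := by
    field_simp [hδdef]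
    rw [hδdef]
    field_simp
  have : M * δ + ‖F‖ * δ ≤ ε / 2 := by nlinarith
  linarith [hN y hyt]


/-- under the hypotheses of the convergence theorem, for all sufficiently
large N the operator λI − F_N P_N is invertible with uniformly bounded inverse. -/
theorem stmt_14
    {X : Type*} [NormedAddCommGroup X] [NormedSpace ℝ X] [CompleteSpace X]
    (F : X →L[ℝ] X) (hFcompact : IsCompactOperator (⇑F))
    (lam : ℝ) (hlam : lam ≠ 0)
    (hFbij : Function.Bijective ⇑(lam • ContinuousLinearMap.id ℝ X - F))
    (Fn Pn : ℕ → X →L[ℝ] X)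
    (hcc : IsCompact (closure {v : X | ∃ N ≥ 1, ∃ u : X, ‖u‖ ≤ 1 ∧ v = Fn N u}))
    (hFconv : ∀ u : X, Tendsto (fun N => Fn N u) atTop (𝓝 (F u)))
    (cP : ℝ) (hcP : ∀ N, ‖Pn N‖ ≤ cP)
    (hPconv : ∀ u : X, Tendsto (fun N => Pn N u) atTop (𝓝 u)) :
    ∃ (N₀ : ℕ) (cI : ℝ), ∀ N ≥ N₀,
      Function.Bijective ⇑(lam • ContinuousLinearMap.id ℝ X - (Fn N).comp (Pn N)) ∧
      ∃ B : X →L[ℝ] X,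
        (lam • ContinuousLinearMap.id ℝ X - (Fn N).comp (Pn N)).comp B
          = ContinuousLinearMap.id ℝ X ∧
        B.comp (lam • ContinuousLinearMap.id ℝ X - (Fn N).comp (Pn N))
          = ContinuousLinearMap.id ℝ X ∧
        ‖B‖ ≤ cI := by
  classical
  set T : X →L[ℝ] X := lam • ContinuousLinearMap.id ℝ X - F with hTdef
  -- T is invertible with continuous inverse
  have hker : LinearMap.ker (T : X →ₗ[ℝ] X) = ⊥ := by rw [LinearMap.ker_eq_bot]; exact hFbij.1
  have hrange : LinearMap.range (T : X →ₗ[ℝ] X) = ⊤ := LinearMap.range_eq_top.mpr hFbij.2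
  set Te : X ≃L[ℝ] X := ContinuousLinearEquiv.ofBijective T hker hrange with hTe
  set T' : X →L[ℝ] X := (Te.symm : X →L[ℝ] X) with hT'def
  have hTeT : ∀ x, Te x = T x := fun x =>
    congrFun (ContinuousLinearEquiv.coeFn_ofBijective T hker hrange) x
  have hT'T : T' * T = (1 : X →L[ℝ] X) := by
    ext x
    show T' (T x) = x
    rw [← hTeT x]
    exact Te.symm_apply_apply x
  have hTT' : T * T' = (1 : X →L[ℝ] X) := by
    ext x
    show T (T' x) = x
    rw [← hTeT (T' x)]
    exact Te.apply_symm_apply x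
  have hFT : F * T = T * F := by
    rw [hTdef]
    have h1 : (1 : X →L[ℝ] X) = ContinuousLinearMap.id ℝ X := rfl
    rw [← h1]
    simp [mul_sub, sub_mul, mul_smul_comm, smul_mul_assoc]
  have hT'F : T' * F = F * T' := by
    calc T' * F = (T' * F) * (T * T') := by rw [hTT', mul_one]
      _ = T' * ((F * T) * T') := by rw [mul_assoc, mul_assoc]
      _ = T' * ((T * F) * T') := by rw [hFT]
      _ = (T' * T) * (F * T') := by rw [mul_assoc, ← mul_assoc]
      _ = F * T' := by rw [hT'T, one_mul]
  -- bound on collectively compact family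
  set S : Set X := {v : X | ∃ N ≥ 1, ∃ u : X, ‖u‖ ≤ 1 ∧ v = Fn N u} with hSdef
  obtain ⟨R, hR⟩ := hcc.isBounded.exists_norm_le
  have hR0 : 0 ≤ R := by
    have h0 : (0 : X) ∈ closure S := by
      apply subset_closure
      exact ⟨1, le_refl 1, 0, by simp⟩
    simpa using hR 0 h0
  have hFnR : ∀ N ≥ 1, ‖Fn N‖ ≤ R := by
    intro N hN
    apply ContinuousLinearMap.opNorm_le_of_unit_norm hR0
    intro x hx
    exact hR _ (subset_closure ⟨N, hN, x, hx.le, rfl⟩)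
  have hcP0 : 0 ≤ cP := le_trans (norm_nonneg _) (hcP 0)
  set G : ℕ → X →L[ℝ] X := fun N => (Fn N).comp (Pn N) with hGdef
  set MG : ℝ := R * cP with hMGdef
  have hGb : ∀ N ≥ 1, ‖G N‖ ≤ MG := by
    intro N hN
    calc ‖G N‖ ≤ ‖Fn N‖ * ‖Pn N‖ := (Fn N).opNorm_comp_le (Pn N)
      _ ≤ R * cP := mul_le_mul (hFnR N hN) (hcP N) (norm_nonneg _) hR0
  have hGbev : ∀ᶠ N in atTop, ‖G N‖ ≤ MG := eventually_atTop.mpr ⟨1, hGb⟩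
  -- pointwise convergence of G N to F
  have hGconv : ∀ u : X, Tendsto (fun N => G N u) atTop (𝓝 (F u)) := by
    intro u
    have h0 : Tendsto (fun N => ‖Pn N u - u‖) atTop (𝓝 0) := by
      have := (hPconv u).sub (tendsto_const_nhds (x := u))
      rw [sub_self] at this
      simpa [Function.comp_def] using (continuous_norm.tendsto 0).comp this
    have h2 : Tendsto (fun N => Fn N (Pn N u) - Fn N u) atTop (𝓝 0) := by
      apply squeeze_zero_norm' (a := fun N => R * ‖Pn N u - u‖)
      · filter_upwards [eventually_ge_atTop 1] with N hN
        calc ‖Fn N (Pn N u) - Fn N u‖ = ‖Fn N (Pn N u - u)‖ := by rw [map_sub]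
          _ ≤ ‖Fn N‖ * ‖Pn N u - u‖ := (Fn N).le_opNorm _
          _ ≤ R * ‖Pn N u - u‖ :=
              mul_le_mul_of_nonneg_right (hFnR N hN) (norm_nonneg _)
      · simpa using h0.const_mul R
    have := h2.add (hFconv u)
    simpa [hGdef] using this
  -- compact sets
  set c : ℝ := cP + 1 with hcdef
  have hc : 0 < c := by linarith
  set K2 : Set X := (fun x : X => c • x) '' closure S with hK2def
  have hK2 : IsCompact K2 := hcc.image (continuous_const_smul c)
  have hGmem : ∀ N ≥ 1, ∀ u : X, ‖u‖ ≤ 1 → G N u ∈ K2 := by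
    intro N hN u hu
    refine ⟨Fn N (c⁻¹ • Pn N u), subset_closure ⟨N, hN, c⁻¹ • Pn N u, ?_, rfl⟩, ?_⟩
    · rw [norm_smul, norm_inv, Real.norm_eq_abs, abs_of_pos hc]
      rw [inv_mul_le_iff₀ hc, mul_one]
      calc ‖Pn N u‖ ≤ ‖Pn N‖ * ‖u‖ := (Pn N).le_opNorm u
        _ ≤ cP * 1 := mul_le_mul (hcP N) hu (norm_nonneg _) hcP0
        _ ≤ c := by linarith
    · show c • Fn N (c⁻¹ • Pn N u) = G N u
      rw [← map_smul, smul_inv_smul₀ (ne_of_gt hc)]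
      rfl
  set K1 : Set X := T' '' K2 with hK1def
  have hK1 : IsCompact K1 := hK2.image T'.continuous
  -- uniform convergence on K1, K2
  have hε1 : (0 : ℝ) < |lam| / 2 := by
    have := abs_pos.mpr hlam; linarith
  have hε2 : (0 : ℝ) < |lam| / (2 * (‖T'‖ + 1)) := by
    have := abs_pos.mpr hlam
    have := norm_nonneg T'
    positivity
  have ev1 := unif_compact G F MG hGbev hGconv K1 hK1 hε1
  have ev2 := unif_compact G F MG hGbev hGconv K2 hK2 hε2
  obtain ⟨N₀, hN₀⟩ := eventually_atTop.mp (ev1.and (ev2.and (eventually_ge_atTop 1)))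
  refine ⟨N₀, 2 * (|lam|⁻¹ * (1 + ‖T'‖ * MG)), ?_⟩
  intro N hNN
  obtain ⟨hev1, hev2, hN1⟩ := hN₀ N hNN
  set A : X →L[ℝ] X := lam • (1 : X →L[ℝ] X) - G N with hAdef
  have hAeq : lam • ContinuousLinearMap.id ℝ X - (Fn N).comp (Pn N) = A := rfl
  set B₀ : X →L[ℝ] X := lam⁻¹ • (1 + T' * G N) with hB₀def
  set Δ : X →L[ℝ] X := lam⁻¹ • ((G N - F) * (T' * G N)) with hΔdef
  set Δ' : X →L[ℝ] X := lam⁻¹ • (T' * ((G N - F) * G N)) with hΔ'def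
  -- algebra
  have e3 : lam • (T' * G N) = G N + F * (T' * G N) := by
    have e1 : T' * (T * G N) = G N := by rw [← mul_assoc, hT'T, one_mul]
    have e2 : T * G N = lam • G N - F * G N := by
      ext x
      simp [hTdef, ContinuousLinearMap.mul_apply]
    rw [e2, mul_sub, mul_smul_comm] at e1
    have e4 : T' * (F * G N) = F * (T' * G N) := by
      rw [← mul_assoc, hT'F, mul_assoc]
    rw [e4] at e1
    exact sub_eq_iff_eq_add.mp e1
  have key1 : A * B₀ = 1 - Δ := by
    have h1 : A * (1 + T' * G N) = lam • (1 : X →L[ℝ] X) - (G N - F) * (T' * G N) := by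
      calc A * (1 + T' * G N)
          = A + A * (T' * G N) := by rw [mul_add, mul_one]
        _ = A + (lam • (T' * G N) - G N * (T' * G N)) := by
            rw [hAdef, sub_mul, smul_mul_assoc, one_mul]
        _ = A + (G N + F * (T' * G N) - G N * (T' * G N)) := by rw [e3]
        _ = lam • (1 : X →L[ℝ] X) - (G N - F) * (T' * G N) := by
            rw [hAdef, sub_mul]
            abel
    rw [hB₀def, mul_smul_comm, h1, smul_sub, smul_smul, inv_mul_cancel₀ hlam, one_smul, hΔdef]
  have key2 : B₀ * A = 1 - Δ' := by
    have h2 : (1 + T' * G N) * A = lam • (1 : X →L[ℝ] X) - T' * ((G N - F) * G N) := by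
      calc (1 + T' * G N) * A
          = A + (T' * G N) * A := by rw [add_mul, one_mul]
        _ = A + (lam • (T' * G N) - T' * (G N * G N)) := by
            rw [hAdef, mul_sub, mul_smul_comm, mul_one, mul_assoc]
        _ = A + (G N + F * (T' * G N) - T' * (G N * G N)) := by rw [e3]
        _ = A + (G N + T' * (F * G N) - T' * (G N * G N)) := by
            rw [← mul_assoc, ← hT'F, mul_assoc]
        _ = lam • (1 : X →L[ℝ] X) - T' * ((G N - F) * G N) := by
            rw [hAdef, sub_mul, mul_sub]
            abel
    rw [hB₀def, smul_mul_assoc, h2, smul_sub, smul_smul, inv_mul_cancel₀ hlam, one_smul, hΔ'def]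
  have habs : (0 : ℝ) < |lam| := abs_pos.mpr hlam
  have hΔnorm : ‖Δ‖ ≤ 1 / 2 := by
    apply ContinuousLinearMap.opNorm_le_of_unit_norm (by norm_num)
    intro x hx
    have hmem2 : G N x ∈ K2 := hGmem N hN1 x hx.le
    have hmem1 : T' (G N x) ∈ K1 := ⟨G N x, hmem2, rfl⟩
    have hb := hev1 _ hmem1
    have happ : Δ x = lam⁻¹ • (G N (T' (G N x)) - F (T' (G N x))) := by
      simp [hΔdef, ContinuousLinearMap.mul_apply]
    rw [happ, norm_smul, Real.norm_eq_abs, abs_inv]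
    calc |lam|⁻¹ * ‖G N (T' (G N x)) - F (T' (G N x))‖
        ≤ |lam|⁻¹ * (|lam| / 2) := by
          exact mul_le_mul_of_nonneg_left hb (by positivity)
      _ = 1 / 2 := by field_simp
  have hΔ'norm : ‖Δ'‖ ≤ 1 / 2 := by
    apply ContinuousLinearMap.opNorm_le_of_unit_norm (by norm_num)
    intro x hx
    have hmem2 : G N x ∈ K2 := hGmem N hN1 x hx.le
    have hb := hev2 _ hmem2
    have happ : Δ' x = lam⁻¹ • T' (G N (G N x) - F (G N x)) := by
      simp [hΔ'def, ContinuousLinearMap.mul_apply]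
    rw [happ, norm_smul, Real.norm_eq_abs, abs_inv]
    have h1 : ‖T' (G N (G N x) - F (G N x))‖ ≤ ‖T'‖ * (|lam| / (2 * (‖T'‖ + 1))) :=
      le_trans (T'.le_opNorm _) (mul_le_mul_of_nonneg_left hb (norm_nonneg _))
    have h2 : ‖T'‖ * (|lam| / (2 * (‖T'‖ + 1))) ≤ |lam| / 2 := by
      rw [← mul_div_assoc, div_le_div_iff₀ (by positivity) (by norm_num)]
      nlinarith [norm_nonneg T', habs.le]
    calc |lam|⁻¹ * ‖T' (G N (G N x) - F (G N x))‖
        ≤ |lam|⁻¹ * (|lam| / 2) := by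
          apply mul_le_mul_of_nonneg_left (le_trans h1 h2) (by positivity)
      _ = 1 / 2 := by field_simp
  have hΔlt : ‖Δ‖ < 1 := lt_of_le_of_lt hΔnorm (by norm_num)
  have hΔ'lt : ‖Δ'‖ < 1 := lt_of_le_of_lt hΔ'norm (by norm_num)
  set u1 : (X →L[ℝ] X)ˣ := Units.oneSub Δ hΔlt with hu1def
  set u2 : (X →L[ℝ] X)ˣ := Units.oneSub Δ' hΔ'lt with hu2def
  have hu1 : (u1 : X →L[ℝ] X) = 1 - Δ := rfl
  have hu2 : (u2 : X →L[ℝ] X) = 1 - Δ' := rfl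
  have hone : ‖(1 : X →L[ℝ] X)‖ ≤ 1 := by
    rw [ContinuousLinearMap.one_def]; exact ContinuousLinearMap.norm_id_le
  have hinv1 : ‖(↑u1⁻¹ : X →L[ℝ] X)‖ ≤ 2 := by
    have hm : (1 - Δ) * (↑u1⁻¹ : X →L[ℝ] X) = 1 := by rw [← hu1]; exact u1.mul_inv
    rw [sub_mul, one_mul] at hm
    have heq : (↑u1⁻¹ : X →L[ℝ] X) = 1 + Δ * ↑u1⁻¹ := sub_eq_iff_eq_add.mp hm
    have hn : ‖(↑u1⁻¹ : X →L[ℝ] X)‖ ≤ 1 + (1 / 2) * ‖(↑u1⁻¹ : X →L[ℝ] X)‖ := by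
      calc ‖(↑u1⁻¹ : X →L[ℝ] X)‖ = ‖1 + Δ * (↑u1⁻¹ : X →L[ℝ] X)‖ := by rw [← heq]
        _ ≤ ‖(1 : X →L[ℝ] X)‖ + ‖Δ * (↑u1⁻¹ : X →L[ℝ] X)‖ := norm_add_le _ _
        _ ≤ 1 + ‖Δ‖ * ‖(↑u1⁻¹ : X →L[ℝ] X)‖ := add_le_add hone (norm_mul_le _ _)
        _ ≤ 1 + (1 / 2) * ‖(↑u1⁻¹ : X →L[ℝ] X)‖ := by
            nlinarith [norm_nonneg (↑u1⁻¹ : X →L[ℝ] X)]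
    linarith
  have hinv2 : ‖(↑u2⁻¹ : X →L[ℝ] X)‖ ≤ 2 := by
    have hm : (1 - Δ') * (↑u2⁻¹ : X →L[ℝ] X) = 1 := by rw [← hu2]; exact u2.mul_inv
    rw [sub_mul, one_mul] at hm
    have heq : (↑u2⁻¹ : X →L[ℝ] X) = 1 + Δ' * ↑u2⁻¹ := sub_eq_iff_eq_add.mp hm
    have hn : ‖(↑u2⁻¹ : X →L[ℝ] X)‖ ≤ 1 + (1 / 2) * ‖(↑u2⁻¹ : X →L[ℝ] X)‖ := by
      calc ‖(↑u2⁻¹ : X →L[ℝ] X)‖ = ‖1 + Δ' * (↑u2⁻¹ : X →L[ℝ] X)‖ := by rw [← heq]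
        _ ≤ ‖(1 : X →L[ℝ] X)‖ + ‖Δ' * (↑u2⁻¹ : X →L[ℝ] X)‖ := norm_add_le _ _
        _ ≤ 1 + ‖Δ'‖ * ‖(↑u2⁻¹ : X →L[ℝ] X)‖ := add_le_add hone (norm_mul_le _ _)
        _ ≤ 1 + (1 / 2) * ‖(↑u2⁻¹ : X →L[ℝ] X)‖ := by
            nlinarith [norm_nonneg (↑u2⁻¹ : X →L[ℝ] X)]
    linarith
  set Rv : X →L[ℝ] X := B₀ * ↑u1⁻¹ with hRvdef
  set Lv : X →L[ℝ] X := ↑u2⁻¹ * B₀ with hLvdef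
  have hAR : A * Rv = 1 := by
    rw [hRvdef, ← mul_assoc, key1, ← hu1]
    exact u1.mul_inv
  have hLA : Lv * A = 1 := by
    rw [hLvdef, mul_assoc, key2, ← hu2]
    exact u2.inv_mul
  have hRL : Rv = Lv := by
    calc Rv = 1 * Rv := (one_mul _).symm
      _ = Lv * A * Rv := by rw [hLA]
      _ = Lv * (A * Rv) := mul_assoc _ _ _
      _ = Lv := by rw [hAR, mul_one]
  have hRA : Rv * A = 1 := by rw [hRL]; exact hLA
  have hB₀norm : ‖B₀‖ ≤ |lam|⁻¹ * (1 + ‖T'‖ * MG) := by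
    rw [hB₀def]
    rw [norm_smul lam⁻¹ (1 + T' * G N), Real.norm_eq_abs, abs_inv]
    apply mul_le_mul_of_nonneg_left _ (by positivity)
    calc ‖(1 : X →L[ℝ] X) + T' * G N‖
        ≤ ‖(1 : X →L[ℝ] X)‖ + ‖T' * G N‖ := norm_add_le _ _
      _ ≤ 1 + ‖T'‖ * ‖G N‖ := add_le_add hone (norm_mul_le _ _)
      _ ≤ 1 + ‖T'‖ * MG := by
          have := mul_le_mul_of_nonneg_left (hGb N hN1) (norm_nonneg T')
          linarith
  have hRvnorm : ‖Rv‖ ≤ 2 * (|lam|⁻¹ * (1 + ‖T'‖ * MG)) := by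
    calc ‖Rv‖ ≤ ‖B₀‖ * ‖(↑u1⁻¹ : X →L[ℝ] X)‖ := norm_mul_le _ _
      _ ≤ (|lam|⁻¹ * (1 + ‖T'‖ * MG)) * 2 := by
          apply mul_le_mul hB₀norm hinv1 (norm_nonneg _) (by positivity)
      _ = 2 * (|lam|⁻¹ * (1 + ‖T'‖ * MG)) := by ring
  have hcompAR : (lam • ContinuousLinearMap.id ℝ X - (Fn N).comp (Pn N)).comp Rv
      = ContinuousLinearMap.id ℝ X := by
    rw [hAeq, ← ContinuousLinearMap.mul_def, ← ContinuousLinearMap.one_def]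
    exact hAR
  have hcompRA : Rv.comp (lam • ContinuousLinearMap.id ℝ X - (Fn N).comp (Pn N))
      = ContinuousLinearMap.id ℝ X := by
    rw [hAeq, ← ContinuousLinearMap.mul_def, ← ContinuousLinearMap.one_def]
    exact hRA
  refine ⟨?_, Rv, hcompAR, hcompRA, hRvnorm⟩
  rw [hAeq]
  apply Function.bijective_iff_has_inverse.mpr
  refine ⟨Rv, fun x => ?_, fun x => ?_⟩
  · have := congrArg (fun f : X →L[ℝ] X => f x) hRA
    simpa [ContinuousLinearMap.mul_apply] using this
  · have := congrArg (fun f : X →L[ℝ] X => f x) hAR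
    simpa [ContinuousLinearMap.mul_apply] using this
end

section
/- Let X be a real Banach space, let F, F_N, P_N be bounded linear operators on X with ‖F_N‖ ≤ c_F and ‖P_N‖ ≤ c_P, and let λ ≠ 0 be a real number such that λI − F_N P_N is a bijection of X onto X with ‖(λI − F_N P_N)^{-1}‖ ≤ c_I. Let f, u, v_N ∈ X satisfy (λI − F) u = f and (λI − F_N P_N) v_N = f. If û ∈ X satisfies P_N û = û and ‖u − û‖ ≤ ε, then ‖u − v_N‖ ≤ c_I ( ‖F u − F_N u‖ + c_F (1 + c_P) ε ). -/
/-- error bound for the iterated discrete collocation solution v_N: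
‖u − v_N‖ ≤ c_I (‖Fu − F_N u‖ + c_F (1 + c_P) ε). -/
theorem stmt_15
    {X : Type*} [NormedAddCommGroup X] [NormedSpace ℝ X] [CompleteSpace X]
    (F Fn Pn : X →L[ℝ] X) (cF cP cI : ℝ)
    (hF : ‖Fn‖ ≤ cF) (hP : ‖Pn‖ ≤ cP)
    (lam : ℝ) (hlam : lam ≠ 0)
    (B : X →L[ℝ] X)
    (hB1 : (lam • ContinuousLinearMap.id ℝ X - Fn.comp Pn).comp B = ContinuousLinearMap.id ℝ X)
    (hB2 : B.comp (lam • ContinuousLinearMap.id ℝ X - Fn.comp Pn) = ContinuousLinearMap.id ℝ X)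
    (hB : ‖B‖ ≤ cI)
    (f u vN uhat : X)
    (hu : (lam • ContinuousLinearMap.id ℝ X - F) u = f)
    (hv : (lam • ContinuousLinearMap.id ℝ X - Fn.comp Pn) vN = f)
    (hhat : Pn uhat = uhat)
    (ε : ℝ) (hε : ‖u - uhat‖ ≤ ε) :
    ‖u - vN‖ ≤ cI * (‖F u - Fn u‖ + cF * (1 + cP) * ε) := by
  have hcF : (0:ℝ) ≤ cF := le_trans (norm_nonneg _) hF
  have hcP : (0:ℝ) ≤ cP := le_trans (norm_nonneg _) hP
  have hcI : (0:ℝ) ≤ cI := le_trans (norm_nonneg _) hB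
  set A := lam • ContinuousLinearMap.id ℝ X - Fn.comp Pn with hA
  have key : u - vN = B (F u - Fn (Pn u)) := by
    have h1 : B (A (u - vN)) = u - vN := by
      have := congrArg (fun T : X →L[ℝ] X => T (u - vN)) hB2
      simpa using this
    have h2 : A (u - vN) = F u - Fn (Pn u) := by
      have hAu : A u = lam • u - Fn (Pn u) := by
        simp [hA, ContinuousLinearMap.sub_apply]
      have hAv : A vN = f := hv
      have hfu : f = lam • u - F u := by
        simpa [ContinuousLinearMap.sub_apply] using hu.symm
      have : A (u - vN) = A u - A vN := by simp [map_sub]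
      rw [this, hAu, hAv, hfu]
      abel
    rw [← h2, h1]
  rw [key]
  have split : F u - Fn (Pn u) = (F u - Fn u) + Fn ((u - uhat) - Pn (u - uhat)) := by
    simp [map_sub, hhat]
  calc ‖B (F u - Fn (Pn u))‖ ≤ ‖B‖ * ‖F u - Fn (Pn u)‖ := B.le_opNorm _
    _ ≤ cI * ‖F u - Fn (Pn u)‖ := by
        exact mul_le_mul_of_nonneg_right hB (norm_nonneg _)
    _ ≤ cI * (‖F u - Fn u‖ + cF * (1 + cP) * ε) := by
        apply mul_le_mul_of_nonneg_left _ hcI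
        rw [split]
        refine le_trans (norm_add_le _ _) (add_le_add_right ?_ _)
        calc ‖Fn ((u - uhat) - Pn (u - uhat))‖
            ≤ ‖Fn‖ * ‖(u - uhat) - Pn (u - uhat)‖ := Fn.le_opNorm _
          _ ≤ cF * ‖(u - uhat) - Pn (u - uhat)‖ :=
              mul_le_mul_of_nonneg_right hF (norm_nonneg _)
          _ ≤ cF * ((1 + cP) * ε) := by
              apply mul_le_mul_of_nonneg_left _ hcF
              calc ‖(u - uhat) - Pn (u - uhat)‖
                  ≤ ‖u - uhat‖ + ‖Pn (u - uhat)‖ := norm_sub_le _ _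
                _ ≤ ε + cP * ε := by
                    refine add_le_add hε ?_
                    calc ‖Pn (u - uhat)‖ ≤ ‖Pn‖ * ‖u - uhat‖ := Pn.le_opNorm _
                      _ ≤ cP * ε := mul_le_mul hP hε (norm_nonneg _) hcP
                _ = (1 + cP) * ε := by ring
          _ = cF * (1 + cP) * ε := by ring
end

section
/- Let X be a real Banach space, let F, F_N, P_N be bounded linear operators on X with ‖F_N‖ ≤ c_F and ‖P_N‖ ≤ c_P, and let λ ≠ 0 be a real number such that λI − F_N P_N is a bijection of X onto X with ‖(λI − F_N P_N)^{-1}‖ ≤ c_I. Let f, u, v_N ∈ X satisfy (λI − F) u = f and (λI − F_N P_N) v_N = f, and set u_N := P_N v_N. If û ∈ X satisfies P_N û = û and ‖u − û‖ ≤ ε, then ‖u − u_N‖ ≤ ‖u − P_N u‖ + c_P ‖u − v_N‖ ≤ (1 + c_P) ε + c_P c_I ( ‖F u − F_N u‖ + c_F (1 + c_P) ε ). -/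
/-- error bound for the discrete collocation solution u_N = P_N v_N:
‖u − u_N‖ ≤ ‖u − P_N u‖ + c_P ‖u − v_N‖ ≤ (1 + c_P) ε + c_P c_I (‖Fu − F_N u‖ + c_F (1 + c_P) ε). -/
theorem stmt_16
    {X : Type*} [NormedAddCommGroup X] [NormedSpace ℝ X] [CompleteSpace X]
    (F Fn Pn : X →L[ℝ] X) (cF cP cI : ℝ)
    (hF : ‖Fn‖ ≤ cF) (hP : ‖Pn‖ ≤ cP)
    (lam : ℝ) (hlam : lam ≠ 0)
    (B : X →L[ℝ] X)
    (hB1 : (lam • ContinuousLinearMap.id ℝ X - Fn.comp Pn).comp B = ContinuousLinearMap.id ℝ X)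
    (hB2 : B.comp (lam • ContinuousLinearMap.id ℝ X - Fn.comp Pn) = ContinuousLinearMap.id ℝ X)
    (hB : ‖B‖ ≤ cI)
    (f u vN uhat : X)
    (hu : (lam • ContinuousLinearMap.id ℝ X - F) u = f)
    (hv : (lam • ContinuousLinearMap.id ℝ X - Fn.comp Pn) vN = f)
    (hhat : Pn uhat = uhat)
    (ε : ℝ) (hε : ‖u - uhat‖ ≤ ε) :
    ‖u - Pn vN‖ ≤ ‖u - Pn u‖ + cP * ‖u - vN‖ ∧
    ‖u - Pn u‖ + cP * ‖u - vN‖ ≤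
      (1 + cP) * ε + cP * cI * (‖F u - Fn u‖ + cF * (1 + cP) * ε) := by
  have hcP : (0:ℝ) ≤ cP := (norm_nonneg _).trans hP
  have hcF : (0:ℝ) ≤ cF := (norm_nonneg _).trans hF
  have hcI : (0:ℝ) ≤ cI := (norm_nonneg _).trans hB
  have hεnn : (0:ℝ) ≤ ε := (norm_nonneg _).trans hε
  -- ‖u − Pn u‖ ≤ (1+cP) ε
  have hA : ‖u - Pn u‖ ≤ (1 + cP) * ε := by
    have heq : u - Pn u = (u - uhat) + Pn (uhat - u) := by
      rw [map_sub, hhat]; abel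
    calc ‖u - Pn u‖ = ‖(u - uhat) + Pn (uhat - u)‖ := by rw [heq]
      _ ≤ ‖u - uhat‖ + ‖Pn (uhat - u)‖ := norm_add_le _ _
      _ ≤ ‖u - uhat‖ + cP * ‖uhat - u‖ := by
          gcongr
          exact (Pn.le_opNorm _).trans (by gcongr)
      _ ≤ ε + cP * ε := by rw [norm_sub_rev uhat]; gcongr
      _ = (1 + cP) * ε := by ring
  -- key identity: u − vN = B (F u − Fn (Pn u))
  have key : u - vN = B (F u - Fn (Pn u)) := by
    have h1 : (lam • ContinuousLinearMap.id ℝ X - Fn.comp Pn) (u - vN)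
        = F u - Fn (Pn u) := by
      simp only [ContinuousLinearMap.sub_apply, ContinuousLinearMap.smul_apply,
        ContinuousLinearMap.id_apply, ContinuousLinearMap.comp_apply] at hu hv ⊢
      rw [map_sub Pn, map_sub Fn, smul_sub]
      rw [← hu] at hv
      have : Fn (Pn vN) = lam • vN - (lam • u - F u) := by
        rw [← hv]; abel
      rw [this]; abel
    have h2 := congrArg (fun w => B w) h1
    rw [← h2]
    have := congrFun (congrArg (fun (T : X →L[ℝ] X) => (T : X → X)) hB2) (u - vN)
    simpa using this.symm
  -- ‖u − vN‖ ≤ cI (‖Fu − Fn u‖ + cF (1+cP) ε)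
  have hV : ‖u - vN‖ ≤ cI * (‖F u - Fn u‖ + cF * ((1 + cP) * ε)) := by
    have hsplit : F u - Fn (Pn u) = (F u - Fn u) + Fn (u - Pn u) := by
      rw [map_sub Fn]; abel
    calc ‖u - vN‖ = ‖B (F u - Fn (Pn u))‖ := by rw [key]
      _ ≤ cI * ‖F u - Fn (Pn u)‖ :=
          (B.le_opNorm _).trans (by gcongr)
      _ ≤ cI * (‖F u - Fn u‖ + cF * ((1 + cP) * ε)) := by
          gcongr
          rw [hsplit]
          refine (norm_add_le _ _).trans ?_
          gcongr
          exact (Fn.le_opNorm _).trans (by gcongr)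
  constructor
  · calc ‖u - Pn vN‖ = ‖(u - Pn u) + Pn (u - vN)‖ := by
          rw [map_sub Pn]; congr 1; abel
      _ ≤ ‖u - Pn u‖ + ‖Pn (u - vN)‖ := norm_add_le _ _
      _ ≤ ‖u - Pn u‖ + cP * ‖u - vN‖ := by
          gcongr
          exact (Pn.le_opNorm _).trans (by gcongr)
  · calc ‖u - Pn u‖ + cP * ‖u - vN‖
        ≤ (1 + cP) * ε + cP * (cI * (‖F u - Fn u‖ + cF * ((1 + cP) * ε))) := by gcongr
      _ = (1 + cP) * ε + cP * cI * (‖F u - Fn u‖ + cF * (1 + cP) * ε) := by ring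
end
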